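/- For each n ∈ ℕ let I_n be a nonempty finite index set and let (a_{n,i})_{i∈I_n} be nonnegative reals with Σ_{i∈I_n} a_{n,i}² = 1, and suppose max_{i∈I_n} a_{n,i} → 0 as n → ∞. Then for every (μ, ν) ∈ ℝ², ∏_{i∈I_n} (1/(2π)) ∫_0^{2π} exp(i a_{n,i} (μ cos t + ν sin t)) dt → exp(−(μ² + ν²)/4) as n → ∞. -/

import Mathlib

set_option maxHeartbeats 1000000

open Real Filter intervalIntegral

noncomputable section
namespace Stmt17X

lemma norm_prod_sub_prod_le {ι : Type*} (s : Finset ι) :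
    ∀ z w : ι → ℂ, (∀ i ∈ s, ‖z i‖ ≤ 1) → (∀ i ∈ s, ‖w i‖ ≤ 1) →
      ‖∏ i ∈ s, z i - ∏ i ∈ s, w i‖ ≤ ∑ i ∈ s, ‖z i - w i‖ := by
  classical
  induction s using Finset.induction_on with
  | empty => simp
  | @insert j s hj ih =>
    intro z w hz hw
    rw [Finset.prod_insert hj, Finset.prod_insert hj, Finset.sum_insert hj]
    have key : z j * ∏ i ∈ s, z i - w j * ∏ i ∈ s, w i
        = z j * (∏ i ∈ s, z i - ∏ i ∈ s, w i) + (z j - w j) * ∏ i ∈ s, w i := by ring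
    rw [key]
    have h1 : ‖z j * (∏ i ∈ s, z i - ∏ i ∈ s, w i)‖ ≤ ∑ i ∈ s, ‖z i - w i‖ := by
      rw [norm_mul]
      calc ‖z j‖ * ‖∏ i ∈ s, z i - ∏ i ∈ s, w i‖
          ≤ 1 * (∑ i ∈ s, ‖z i - w i‖) := by
            apply mul_le_mul (hz j (Finset.mem_insert_self _ _))
              (ih z w (fun i hi => hz i (Finset.mem_insert_of_mem hi))
                (fun i hi => hw i (Finset.mem_insert_of_mem hi))) (norm_nonneg _) zero_le_one
        _ = ∑ i ∈ s, ‖z i - w i‖ := one_mul _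
    have h2 : ‖(z j - w j) * ∏ i ∈ s, w i‖ ≤ ‖z j - w j‖ := by
      rw [norm_mul]
      have : ‖∏ i ∈ s, w i‖ ≤ 1 := by
        calc ‖∏ i ∈ s, w i‖ ≤ ∏ i ∈ s, ‖w i‖ := le_of_eq (norm_prod _ _)
          _ ≤ 1 := Finset.prod_le_one (fun i _ => norm_nonneg _)
                (fun i hi => hw i (Finset.mem_insert_of_mem hi))
      calc ‖z j - w j‖ * ‖∏ i ∈ s, w i‖ ≤ ‖z j - w j‖ * 1 :=
            mul_le_mul_of_nonneg_left this (norm_nonneg _)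
        _ = _ := mul_one _
    calc ‖_ + _‖ ≤ _ := norm_add_le _ _
      _ ≤ ‖z j - w j‖ + ∑ i ∈ s, ‖z i - w i‖ := by linarith

lemma norm_factor_le_one (μ ν a : ℝ) :
    ‖(((1 / (2 * π) : ℝ)) : ℂ) * ∫ t in (0:ℝ)..(2*π),
        Complex.exp (Complex.I * ((a * (μ * Real.cos t + ν * Real.sin t) : ℝ) : ℂ))‖ ≤ 1 := by
  have hπ : (0:ℝ) < π := Real.pi_pos
  have h1 : ‖∫ t in (0:ℝ)..(2*π),
      Complex.exp (Complex.I * ((a * (μ * Real.cos t + ν * Real.sin t) : ℝ) : ℂ))‖ ≤ 1 * |2*π - 0| := by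
    apply intervalIntegral.norm_integral_le_of_norm_le_const
    intro t _
    rw [Complex.norm_exp]
    simp
  rw [norm_mul]
  have : ‖(((1 / (2 * π) : ℝ)) : ℂ)‖ = 1/(2*π) := by
    rw [Complex.norm_real, Real.norm_eq_abs, abs_of_pos (by positivity)]
  rw [this]
  calc (1/(2*π)) * ‖_‖ ≤ (1/(2*π)) * (1 * |2*π - 0|) := by
        apply mul_le_mul_of_nonneg_left h1 (by positivity)
    _ = 1 := by
        rw [sub_zero, abs_of_pos (by positivity)]
        field_simp

lemma pointwise_est (x : ℝ) (hx : |x| ≤ 1) :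
    ‖Complex.exp (Complex.I * (x:ℂ)) - (1 + Complex.I * (x:ℂ) - (x:ℂ)^2/2)‖ ≤ |x|^3 := by
  have hx' : ‖Complex.I * (x:ℂ)‖ ≤ 1 := by
    rw [norm_mul, Complex.norm_I, Complex.norm_real, Real.norm_eq_abs, one_mul]; exact hx
  have h := Complex.exp_bound hx' (n := 3) (by norm_num)
  have hsum : ∑ i ∈ Finset.range 3, (Complex.I * (x:ℂ)) ^ i / (Nat.factorial i) =
      1 + Complex.I * (x:ℂ) - (x:ℂ)^2/2 := by
    simp [Finset.sum_range_succ, Nat.factorial]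
    ring_nf
    simp [Complex.I_sq]
    ring
  rw [hsum, norm_mul, Complex.norm_I, Complex.norm_real, Real.norm_eq_abs, one_mul] at h
  norm_num [Nat.factorial] at h
  nlinarith [pow_nonneg (abs_nonneg x) 3]

lemma integral_g (μ ν : ℝ) :
    ∫ t in (0:ℝ)..(2*π), (μ * Real.cos t + ν * Real.sin t) = 0 := by
  have h1 : IntervalIntegrable (fun t => μ * Real.cos t) MeasureTheory.volume 0 (2*π) :=
    Continuous.intervalIntegrable (by fun_prop) _ _
  have h2 : IntervalIntegrable (fun t => ν * Real.sin t) MeasureTheory.volume 0 (2*π) :=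
    Continuous.intervalIntegrable (by fun_prop) _ _
  rw [intervalIntegral.integral_add h1 h2,
    intervalIntegral.integral_const_mul, intervalIntegral.integral_const_mul,
    integral_cos, integral_sin]
  simp [Real.sin_two_pi, Real.cos_two_pi]

lemma integral_g_sq (μ ν : ℝ) :
    ∫ t in (0:ℝ)..(2*π), (μ * Real.cos t + ν * Real.sin t)^2 = π * (μ^2 + ν^2) := by
  have heq : ∀ t : ℝ, (μ * Real.cos t + ν * Real.sin t)^2
      = μ^2 * Real.cos t^2 + (ν^2 * Real.sin t^2 + (2*μ*ν) * (Real.sin t * Real.cos t)) := by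
    intro t; ring
  have h1 : IntervalIntegrable (fun t => μ^2 * Real.cos t^2) MeasureTheory.volume 0 (2*π) :=
    Continuous.intervalIntegrable (by fun_prop) _ _
  have h2 : IntervalIntegrable (fun t => ν^2 * Real.sin t^2) MeasureTheory.volume 0 (2*π) :=
    Continuous.intervalIntegrable (by fun_prop) _ _
  have h3 : IntervalIntegrable (fun t => (2*μ*ν) * (Real.sin t * Real.cos t)) MeasureTheory.volume 0 (2*π) :=
    Continuous.intervalIntegrable (by fun_prop) _ _
  rw [intervalIntegral.integral_congr (fun t _ => heq t),
    intervalIntegral.integral_add h1 (h2.add h3), intervalIntegral.integral_add h2 h3,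
    intervalIntegral.integral_const_mul, intervalIntegral.integral_const_mul,
    intervalIntegral.integral_const_mul, integral_cos_sq, integral_sin_sq, integral_sin_mul_cos₁]
  simp [Real.sin_two_pi, Real.cos_two_pi]
  ring

lemma factor_close (μ ν a : ℝ) (ha : 0 ≤ a) (har : a * (|μ| + |ν|) ≤ 1) :
    ‖(((1 / (2 * π) : ℝ)) : ℂ) * (∫ t in (0:ℝ)..(2*π),
        Complex.exp (Complex.I * ((a * (μ * Real.cos t + ν * Real.sin t) : ℝ) : ℂ)))
      - ((1 - a^2 * (μ^2+ν^2)/4 : ℝ) : ℂ)‖ ≤ a^3 * (|μ| + |ν|)^3 := by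
  have hπ : (0:ℝ) < π := Real.pi_pos
  set r := |μ| + |ν| with hrdef
  have hr : 0 ≤ r := by positivity
  set g : ℝ → ℝ := fun t => μ * Real.cos t + ν * Real.sin t with hgdef
  have hgbd : ∀ t, |g t| ≤ r := by
    intro t
    calc |g t| ≤ |μ * Real.cos t| + |ν * Real.sin t| := abs_add_le _ _
      _ ≤ |μ| * 1 + |ν| * 1 := by
          rw [abs_mul, abs_mul]
          gcongr
          · exact Real.abs_cos_le_one t
          · exact Real.abs_sin_le_one t
      _ = r := by ring
  set P : ℝ → ℂ := fun t => 1 + Complex.I * ((a * g t : ℝ) : ℂ) - ((a * g t : ℝ) : ℂ)^2/2 with hPdef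
  have hPconv : ∀ t : ℝ, P t = ((1 - (a * g t)^2/2 : ℝ) : ℂ) + ((a * g t : ℝ) : ℂ) * Complex.I := by
    intro t; simp only [hPdef]; push_cast; ring
  have hcontE : Continuous fun t => Complex.exp (Complex.I * ((a * g t : ℝ):ℂ)) := by fun_prop
  have hcontP : Continuous P := by fun_prop
  -- compute ∫ P
  have hintP : ∫ t in (0:ℝ)..(2*π), P t = ((2*π - a^2*(μ^2+ν^2)*π/2 : ℝ) : ℂ) := by
    rw [intervalIntegral.integral_congr (fun t _ => hPconv t),
      intervalIntegral.integral_add (Continuous.intervalIntegrable (by fun_prop) _ _)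
        (Continuous.intervalIntegrable (by fun_prop) _ _),
      intervalIntegral.integral_mul_const]
    have c1 : (∫ t in (0:ℝ)..(2*π), ((1 - (a * g t)^2/2 : ℝ) : ℂ))
        = ((∫ t in (0:ℝ)..(2*π), (1 - (a * g t)^2/2) : ℝ) : ℂ) := RCLike.intervalIntegral_ofReal
    have c2 : (∫ t in (0:ℝ)..(2*π), ((a * g t : ℝ) : ℂ))
        = ((∫ t in (0:ℝ)..(2*π), (a * g t) : ℝ) : ℂ) := RCLike.intervalIntegral_ofReal
    rw [c1, c2]
    have r2 : ∫ t in (0:ℝ)..(2*π), (a * g t) = 0 := by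
      rw [intervalIntegral.integral_const_mul, integral_g μ ν, mul_zero]
    have r1 : ∫ t in (0:ℝ)..(2*π), (1 - (a * g t)^2/2) = 2*π - a^2*(μ^2+ν^2)*π/2 := by
      have heq : ∀ t : ℝ, (1 - (a * g t)^2/2) = 1 - (a^2/2) * (g t)^2 := by intro t; ring
      rw [intervalIntegral.integral_congr (fun t _ => heq t),
        intervalIntegral.integral_sub (Continuous.intervalIntegrable (by fun_prop) _ _)
          (Continuous.intervalIntegrable (by fun_prop) _ _),
        intervalIntegral.integral_const_mul, integral_g_sq μ ν]
      simp
      ring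
    rw [r1, r2]
    simp
  -- the difference written as one integral
  have hkey : (((1 / (2 * π) : ℝ)) : ℂ) * (∫ t in (0:ℝ)..(2*π),
        Complex.exp (Complex.I * ((a * g t : ℝ) : ℂ))) - ((1 - a^2 * (μ^2+ν^2)/4 : ℝ) : ℂ)
      = (((1 / (2 * π) : ℝ)) : ℂ) * ∫ t in (0:ℝ)..(2*π),
          (Complex.exp (Complex.I * ((a * g t : ℝ) : ℂ)) - P t) := by
    rw [intervalIntegral.integral_sub (hcontE.intervalIntegrable _ _) (hcontP.intervalIntegrable _ _),
      mul_sub, hintP]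
    have : (((1 / (2 * π) : ℝ)) : ℂ) * ((2*π - a^2*(μ^2+ν^2)*π/2 : ℝ) : ℂ)
        = ((1 - a^2 * (μ^2+ν^2)/4 : ℝ) : ℂ) := by
      rw [← Complex.ofReal_mul]
      congr 1
      field_simp
      ring
    rw [this]
  rw [hkey, norm_mul]
  have hnc : ‖(((1 / (2 * π) : ℝ)) : ℂ)‖ = 1/(2*π) := by
    rw [Complex.norm_real, Real.norm_eq_abs, abs_of_pos (by positivity)]
  have hbd : ‖∫ t in (0:ℝ)..(2*π), (Complex.exp (Complex.I * ((a * g t : ℝ) : ℂ)) - P t)‖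
      ≤ (a*r)^3 * |2*π - 0| := by
    apply intervalIntegral.norm_integral_le_of_norm_le_const
    intro t _
    have hx : |a * g t| ≤ a * r := by
      rw [abs_mul, abs_of_nonneg ha]
      exact mul_le_mul_of_nonneg_left (hgbd t) ha
    have hx1 : |a * g t| ≤ 1 := hx.trans har
    calc ‖Complex.exp (Complex.I * ((a * g t : ℝ) : ℂ)) - P t‖ ≤ |a * g t|^3 :=
          pointwise_est _ hx1
      _ ≤ (a*r)^3 := by
          apply pow_le_pow_left₀ (abs_nonneg _) hx _
  rw [hnc]
  calc (1/(2*π)) * ‖_‖ ≤ (1/(2*π)) * ((a*r)^3 * |2*π - 0|) :=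
        mul_le_mul_of_nonneg_left hbd (by positivity)
    _ = a^3 * r^3 := by
        rw [sub_zero, abs_of_pos (by positivity), mul_pow]
        field_simp

end Stmt17X
end

open Stmt17X
open Real Filter

theorem stmt_17 {ι : Type*} (I : ℕ → Finset ι) (hne : ∀ n, (I n).Nonempty)
    (a : ℕ → ι → ℝ) (ha0 : ∀ n, ∀ i ∈ I n, 0 ≤ a n i)
    (hnorm : ∀ n, ∑ i ∈ I n, (a n i) ^ 2 = 1)
    (hmax : Tendsto (fun n => (I n).sup' (hne n) (a n)) atTop (nhds 0)) :
    ∀ μ ν : ℝ,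
      Tendsto (fun n => ∏ i ∈ I n, (((1 / (2 * π) : ℝ) : ℂ) *
          ∫ t in (0 : ℝ)..(2 * π),
            Complex.exp (Complex.I * ((a n i * (μ * Real.cos t + ν * Real.sin t) : ℝ) : ℂ))))
        atTop (nhds (Complex.exp (-(((μ ^ 2 + ν ^ 2 : ℝ) : ℂ)) / 4))) := by
  intro μ ν
  have hπ : (0:ℝ) < π := Real.pi_pos
  set r := |μ| + |ν| with hrdef
  have hr : 0 ≤ r := by positivity
  have hc : 0 ≤ (μ^2 + ν^2)/4 := by positivity
  set c := (μ^2 + ν^2)/4 with hcdef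
  set M : ℕ → ℝ := fun n => (I n).sup' (hne n) (a n) with hMdef
  rw [← tendsto_sub_nhds_zero_iff]
  set δ := min 1 (1/(r + c + 1)) with hδdef
  have hrc1 : (0:ℝ) < r + c + 1 := by positivity
  have hδpos : 0 < δ := lt_min one_pos (by positivity)
  have hδ1 : δ ≤ 1 := min_le_left _ _
  have hδrc : δ * (r + c + 1) ≤ 1 := by
    have h := min_le_right 1 (1/(r + c + 1))
    calc δ * (r + c + 1) ≤ (1/(r+c+1)) * (r+c+1) :=
          mul_le_mul_of_nonneg_right (hδdef ▸ h) hrc1.le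
      _ = 1 := by field_simp
  apply squeeze_zero_norm' (a := fun n => (r^3 + c^2) * M n)
  · filter_upwards [hmax.eventually_lt_const hδpos] with n hMn
    have hMδ : M n ≤ δ := hMn.le
    set z : ι → ℂ := fun i => (((1 / (2 * π) : ℝ)) : ℂ) *
      ∫ t in (0 : ℝ)..(2 * π),
        Complex.exp (Complex.I * ((a n i * (μ * Real.cos t + ν * Real.sin t) : ℝ) : ℂ)) with hzdef
    set w : ι → ℂ := fun i => Complex.exp (((-((a n i)^2 * c) : ℝ)) : ℂ) with hwdef
    have hprodw : ∏ i ∈ I n, w i = Complex.exp (-(((μ ^ 2 + ν ^ 2 : ℝ) : ℂ)) / 4) := by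
      rw [hwdef, ← Complex.exp_sum, ← Complex.ofReal_sum]
      have hsum : ∑ i ∈ I n, -((a n i)^2 * c) = -c := by
        rw [Finset.sum_neg_distrib, ← Finset.sum_mul, hnorm n, one_mul]
      rw [hsum]
      congr 1
      rw [hcdef]
      push_cast
      ring
    rw [← hprodw]
    have hz1 : ∀ i ∈ I n, ‖z i‖ ≤ 1 := fun i _ => norm_factor_le_one μ ν (a n i)
    have hw1 : ∀ i ∈ I n, ‖w i‖ ≤ 1 := by
      intro i hi
      rw [hwdef]
      simp only [Complex.norm_exp_ofReal]
      rw [Real.exp_le_one_iff]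
      have := ha0 n i hi
      nlinarith [hc]
    have key : ∀ i ∈ I n, ‖z i - w i‖ ≤ (r^3 + c^2) * (M n * (a n i)^2) := by
      intro i hi
      have hai0 : 0 ≤ a n i := ha0 n i hi
      have haiM : a n i ≤ M n := Finset.le_sup' (a n) hi
      have haiδ : a n i ≤ δ := haiM.trans hMδ
      have h1 : a n i * r ≤ 1 := by nlinarith [hδrc, hδpos.le]
      have hy0 : 0 ≤ (a n i)^2 * c := by positivity
      have ha2 : (a n i)^2 ≤ δ := by nlinarith [haiδ, hai0, hδ1, hδpos.le]
      have hy1 : (a n i)^2 * c ≤ 1 := by nlinarith [ha2, hc, hδrc, hr, hδpos.le]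
      have e1 := factor_close μ ν (a n i) hai0 h1
      have e2 : ‖((1 - (a n i)^2 * (μ^2+ν^2)/4 : ℝ) : ℂ) - w i‖ ≤ ((a n i)^2 * c)^2 := by
        rw [hwdef]
        simp only
        rw [← Complex.ofReal_exp, ← Complex.ofReal_sub, Complex.norm_real, Real.norm_eq_abs]
        have h3 : |Real.exp (-((a n i)^2 * c)) - 1 - (-((a n i)^2 * c))| ≤ (-((a n i)^2 * c))^2 :=
          Real.abs_exp_sub_one_sub_id_le (by rw [abs_neg, abs_of_nonneg hy0]; exact hy1)
        have habs : |(1 - (a n i)^2 * (μ^2+ν^2)/4) - Real.exp (-((a n i)^2 * c))|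
            = |Real.exp (-((a n i)^2 * c)) - 1 - (-((a n i)^2 * c))| := by
          rw [hcdef, abs_sub_comm]
          congr 1
          ring
        rw [habs]
        calc _ ≤ (-((a n i)^2 * c))^2 := h3
          _ = ((a n i)^2 * c)^2 := by ring
      calc ‖z i - w i‖
          = ‖(z i - ((1 - (a n i)^2 * (μ^2+ν^2)/4 : ℝ) : ℂ))
              + (((1 - (a n i)^2 * (μ^2+ν^2)/4 : ℝ) : ℂ) - w i)‖ := by rw [sub_add_sub_cancel]
        _ ≤ ‖z i - ((1 - (a n i)^2 * (μ^2+ν^2)/4 : ℝ) : ℂ)‖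
              + ‖((1 - (a n i)^2 * (μ^2+ν^2)/4 : ℝ) : ℂ) - w i‖ := norm_add_le _ _
        _ ≤ (a n i)^3 * r^3 + ((a n i)^2 * c)^2 := add_le_add e1 e2
        _ ≤ (r^3 + c^2) * (M n * (a n i)^2) := by
            have hA : (a n i)^3 ≤ M n * (a n i)^2 := by nlinarith [haiM, sq_nonneg (a n i)]
            have hB : (a n i)^4 ≤ (a n i)^3 := by
              nlinarith [haiδ, hδ1, hai0, pow_nonneg hai0 3]
            have k1 := mul_le_mul_of_nonneg_right hA (pow_nonneg hr 3)
            have k2 := mul_le_mul_of_nonneg_right hB (sq_nonneg c)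
            have k3 := mul_le_mul_of_nonneg_right hA (sq_nonneg c)
            nlinarith [k1, k2, k3]
    calc ‖∏ i ∈ I n, z i - ∏ i ∈ I n, w i‖ ≤ ∑ i ∈ I n, ‖z i - w i‖ :=
          norm_prod_sub_prod_le (I n) z w hz1 hw1
      _ ≤ ∑ i ∈ I n, (r^3 + c^2) * (M n * (a n i)^2) := Finset.sum_le_sum key
      _ = (r^3 + c^2) * M n := by
          rw [← Finset.mul_sum, ← Finset.mul_sum, hnorm n, mul_one]
  · have h := hmax.const_mul (r^3 + c^2)
    simpa using h
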